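/- (Mover properties do not characterize sound atomic fusions.) Let Σ₀ = {a,b₁,b₂,c} ∪ {β}, and let G, G′, G_β, F and I be as follows: G′ has locations {p,q}, initial p, exit q, and edges (p,a,q), (p,β,q), (p,c,q); G_β has locations {u,s,v}, initial u, exit v, and edges (u,b₁,s), (s,b₂,v); G has locations {p,s,q}, initial p, exit q, and edges (p,a,q), (p,b₁,s), (s,b₂,q), (p,c,q); F = (G′,(β,G_β)); I = {a,b₁,b₂,c}² ∖ {(a,b₂),(b₁,c)}. Let I′ = I ∖ {(b₁,b₂)}. Then: (i) every action in {a,b₁,b₂,c} has the same left-mover and right-mover status with respect to I and with respect to I′; (ii) F is unsound with respect to I′ — in particular, the interleaving ⟨b₁:1⟩⟨b₁:2⟩⟨b₂:1⟩⟨b₂:2⟩ ∈ L(G) satisfies τ ⊑_{I′} τ′ for no τ′ ∈ μ̂_F(L(G′)). -/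

import Mathlib

/-!
Common definitions: control flow graphs, traces, interleavings of parameterized
programs, the covering preorder, Mazurkiewicz reductions, atomic fusions,
sync-point instrumentations, locks and general synchronization alphabets.
-/

/-- `PathRel E ℓ w ℓ'` : the word `w` labels a path from `ℓ` to `ℓ'` in the
labeled graph with edge relation `E`. -/
inductive PathRel {L α : Type} (E : L → α → L → Prop) : L → List α → L → Prop
  | nil (ℓ : L) : PathRel E ℓ [] ℓ
  | cons {ℓ ℓ' ℓ'' : L} {a : α} {w : List α} :
      E ℓ a ℓ' → PathRel E ℓ' w ℓ'' → PathRel E ℓ (a :: w) ℓ''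

/-- A control flow graph over the alphabet `α`. -/
structure CFG (α : Type) where
  Loc : Type
  loc_finite : Finite Loc
  Edge : Loc → α → Loc → Prop
  init : Loc
  exit : Loc
  init_ne_exit : init ≠ exit

namespace CFG

variable {α : Type}

/-- The set of words labeling paths from the initial to the exit location. -/
def traces (G : CFG α) : Set (List α) := { w | PathRel G.Edge G.init w G.exit }

/-- The set of actions occurring in `G`. -/
def alphabet (G : CFG α) : Set α := { a | ∃ ℓ ℓ', G.Edge ℓ a ℓ' }

/-- Action `a` labels at most one edge of `G`. -/
def UniqueAct (G : CFG α) (a : α) : Prop :=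
  ∀ ⦃ℓ₁ ℓ₁' ℓ₂ ℓ₂' : G.Loc⦄, G.Edge ℓ₁ a ℓ₁' → G.Edge ℓ₂ a ℓ₂' → ℓ₁ = ℓ₂ ∧ ℓ₁' = ℓ₂'

/-- The transition relation is finite. -/
def EdgeFinite (G : CFG α) : Prop :=
  { p : G.Loc × α × G.Loc | G.Edge p.1 p.2.1 p.2.2 }.Finite

/-- Every location is reachable from the initial location, and the exit
location is reachable from every location. -/
def Reachable (G : CFG α) : Prop :=
  ∀ ℓ : G.Loc, (∃ w, PathRel G.Edge G.init w ℓ) ∧ (∃ w, PathRel G.Edge ℓ w G.exit)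

/-- Well-formedness of a CFG over a plain alphabet (finitely many transitions,
reachability conditions, and every action labels at most one edge). -/
def WF (G : CFG α) : Prop := G.EdgeFinite ∧ G.Reachable ∧ ∀ a : α, G.UniqueAct a

end CFG

/-! ### Interleavings -/

/-- `τ↑i` : the projection of an interleaving to the actions of thread `i`. -/
def projThread {α : Type} (i : ℕ) (τ : List (α × ℕ)) : List α :=
  (τ.filter (fun x => x.2 == i)).map Prod.fst

/-- The interleavings of the parameterized program with thread template `G`
and no synchronization. -/
def progLang {α : Type} (G : CFG α) : Set (List (α × ℕ)) :=
  { τ | ∀ i : ℕ, projThread i τ ∈ G.traces ∨ projThread i τ = [] }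

/-- One swap of two adjacent commuting indexed actions of different threads. -/
def SwapStep {α : Type} (I : Set (α × α)) (τ τ' : List (α × ℕ)) : Prop :=
  ∃ (ρ σ : List (α × ℕ)) (a b : α) (i j : ℕ),
    (a, b) ∈ I ∧ i ≠ j ∧
      τ = ρ ++ (a, i) :: (b, j) :: σ ∧ τ' = ρ ++ (b, j) :: (a, i) :: σ

/-- The covering preorder `⊑_I`: the smallest reflexive-transitive relation
allowing swaps of adjacent `I`-commuting actions of different threads. -/
def CoveredBy {α : Type} (I : Set (α × α)) : List (α × ℕ) → List (α × ℕ) → Prop :=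
  Relation.ReflTransGen (SwapStep I)

/-- `L₁` is a Mazurkiewicz reduction (up to `I`) of `L₂`. -/
def MazReduction {α : Type} (I : Set (α × α)) (L₁ L₂ : Set (List (α × ℕ))) : Prop :=
  L₁ ⊆ L₂ ∧ ∀ τ ∈ L₂, ∃ τ' ∈ L₁, CoveredBy I τ τ'

/-! ### Morphisms -/

/-- Image of a word under a morphism `μ : α → 𝒫(β^*)`. -/
def morphWord {α β : Type} (μ : α → Set (List β)) : List α → Set (List β)
  | [] => {[]}
  | x :: w => { s | ∃ u ∈ μ x, ∃ v ∈ morphWord μ w, s = u ++ v }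

/-- Image of a language under a morphism. -/
def morphLang {α β : Type} (μ : α → Set (List β)) (L : Set (List α)) : Set (List β) :=
  ⋃ w ∈ L, morphWord μ w

/-! ### Atomic fusions -/

/-- Locations of the graph obtained from `G'` by substituting `Gβ k` for the
edge labeled `β k`: locations of `G'` together with the interior locations of
each `Gβ k`. -/
def fuseLoc {α : Type} (G' : CFG α) {n : ℕ} (Gβ : Fin n → CFG α) : Type :=
  G'.Loc ⊕ Σ k : Fin n, { ℓ : (Gβ k).Loc // ℓ ≠ (Gβ k).init ∧ ℓ ≠ (Gβ k).exit }

open Classical in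
/-- Embedding of the locations of `Gβ k` into the substituted graph, identifying
the initial and exit locations of `Gβ k` with the endpoints of the `β k` edge. -/
noncomputable def fuseEmb {α : Type} (G' : CFG α) {n : ℕ} (Gβ : Fin n → CFG α)
    (src tgt : Fin n → G'.Loc) (k : Fin n) (ℓ : (Gβ k).Loc) : fuseLoc G' Gβ :=
  if h1 : ℓ = (Gβ k).init then Sum.inl (src k)
  else if h2 : ℓ = (Gβ k).exit then Sum.inl (tgt k)
  else Sum.inr ⟨k, ℓ, h1, h2⟩

/-- Edges of the graph obtained from `G'` by substituting each `Gβ k` for the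
edge labeled `β k` (with endpoints `src k`, `tgt k`). -/
def fuseEdge {α : Type} (G' : CFG α) {n : ℕ} (β : Fin n → α) (Gβ : Fin n → CFG α)
    (src tgt : Fin n → G'.Loc) (x : fuseLoc G' Gβ) (a : α) (y : fuseLoc G' Gβ) : Prop :=
  (∃ ℓ ℓ', G'.Edge ℓ a ℓ' ∧ (∀ k, a ≠ β k) ∧ x = Sum.inl ℓ ∧ y = Sum.inl ℓ') ∨
  (∃ k ℓ ℓ', (Gβ k).Edge ℓ a ℓ' ∧
      x = fuseEmb G' Gβ src tgt k ℓ ∧ y = fuseEmb G' Gβ src tgt k ℓ')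

/-- An atomic fusion `F = (G', (β 0, Gβ 0), …, (β (n-1), Gβ (n-1)))` of the CFG `G`:
`G` is (up to isomorphism) obtained from `G'` by replacing, for each `k`, the unique
edge labeled `β k` by the graph `Gβ k`. -/
structure AtomicFusion {α : Type} (G : CFG α) (n : ℕ) where
  G' : CFG α
  β : Fin n → α
  Gβ : Fin n → CFG α
  β_inj : Function.Injective β
  src : Fin n → G'.Loc
  tgt : Fin n → G'.Loc
  β_edge : ∀ k, G'.Edge (src k) (β k) (tgt k)
  Gβ_alph : ∀ k a, a ∈ (Gβ k).alphabet → ∀ k', a ≠ β k'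
  Gβ_nonempty : ∀ k, ((Gβ k).traces).Nonempty
  iso : G.Loc ≃ fuseLoc G' Gβ
  iso_init : iso G.init = Sum.inl G'.init
  iso_exit : iso G.exit = Sum.inl G'.exit
  iso_edge : ∀ ℓ a ℓ', G.Edge ℓ a ℓ' ↔ fuseEdge G' β Gβ src tgt (iso ℓ) a (iso ℓ')

namespace AtomicFusion

variable {α : Type} {G : CFG α} {n : ℕ}

/-- The fusion morphism `μ_F`: maps each block symbol `β k` to `traces (Gβ k)`
and any other action `a` to `{[a]}`. -/
def morph (F : AtomicFusion G n) (a : α) : Set (List α) :=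
  { w | (∃ k, a = F.β k ∧ w ∈ (F.Gβ k).traces) ∨ ((∀ k, a ≠ F.β k) ∧ w = [a]) }

/-- The lift `μ̂_F` of the fusion morphism to indexed actions. -/
def morphIdx (F : AtomicFusion G n) (x : α × ℕ) : Set (List (α × ℕ)) :=
  { w | ∃ u ∈ F.morph x.1, w = u.map (fun a => (a, x.2)) }

/-- Soundness of an atomic fusion wrt. the commutativity relation `I`:
`μ̂_F(L(G'))` is a Mazurkiewicz reduction (up to `I`) of `L(G)`. -/
def Sound (F : AtomicFusion G n) (I : Set (α × α)) : Prop :=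
  MazReduction I (morphLang F.morphIdx (progLang F.G')) (progLang G)

end AtomicFusion

/-! ### Movers -/

/-- `a` is a left-mover if `(b, a) ∈ I` for all `b ∈ Σ(G)`. -/
def LeftMover {α : Type} (G : CFG α) (I : Set (α × α)) (a : α) : Prop :=
  ∀ b ∈ G.alphabet, (b, a) ∈ I

/-- `a` is a right-mover if `(a, b) ∈ I` for all `b ∈ Σ(G)`. -/
def RightMover {α : Type} (G : CFG α) (I : Set (α × α)) (a : α) : Prop :=
  ∀ b ∈ G.alphabet, (a, b) ∈ I

/-! ### Sync-points -/

/-- The word `⟨•:t₁⟩ … ⟨•:t_n⟩` where `T = {t₁ < … < t_n}`; the sync-point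
symbol `•` is represented by `none`. -/
def bulletWord {α : Type} (T : Finset ℕ) : List (Option α × ℕ) :=
  (T.sort (· ≤ ·)).map (fun t => ((none : Option α), t))

/-- A concatenation of words, each of which either consists of program actions
of threads in `T` only, or equals `⟨•:T⟩`. -/
inductive PhaseWord {α : Type} (T : Finset ℕ) : List (Option α × ℕ) → Prop
  | nil : PhaseWord T []
  | act {w τ : List (Option α × ℕ)} :
      (∀ x ∈ w, (∃ a : α, x.1 = some a) ∧ x.2 ∈ T) → PhaseWord T τ → PhaseWord T (w ++ τ)
  | bullet {τ : List (Option α × ℕ)} : PhaseWord T τ → PhaseWord T (bulletWord T ++ τ)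

/-- `sync_{•,T}`: while the threads in `T` are running they pass sync-points
together; at some point a subset `T' ⊊ T` of threads remains. -/
inductive SyncT {α : Type} : Finset ℕ → List (Option α × ℕ) → Prop
  | base : SyncT ∅ []
  | step {T T' : Finset ℕ} {τ₁ τ₂ : List (Option α × ℕ)} :
      T' ⊂ T → PhaseWord T τ₁ → SyncT T' τ₂ → SyncT T (τ₁ ++ τ₂)

/-- `sync_•(τ̂)` : there is a finite set `T ⊆ ℕ` with `sync_{•,T}(τ̂)`. -/
def SyncBullet {α : Type} (τ : List (Option α × ℕ)) : Prop := ∃ T : Finset ℕ, SyncT T τ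

/-- Restriction of an indexed word over `Σ ∪ {•}` to its `Σ`-indexed letters. -/
def restrictSigma {α : Type} (τ : List (Option α × ℕ)) : List (α × ℕ) :=
  τ.filterMap (fun x => x.1.map (fun a => (a, x.2)))

/-- `G'` is a sync-point instrumentation of `G`: erasing `•` from the traces of
`G'` yields exactly the traces of `G`, injectively. -/
structure SyncInstr {α : Type} (G : CFG α) (G' : CFG (Option α)) : Prop where
  proj_traces : G.traces = (fun τ => τ.filterMap id) '' G'.traces
  proj_inj : ∀ τ₁ ∈ G'.traces, ∀ τ₂ ∈ G'.traces, τ₁.filterMap id = τ₂.filterMap id → τ₁ = τ₂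

/-- Well-formedness of a CFG over `Σ ∪ {•}` (every action of `Σ` labels at most
one edge; `•` may label several edges). -/
def CFG.WFsync {α : Type} (G' : CFG (Option α)) : Prop :=
  G'.EdgeFinite ∧ G'.Reachable ∧ ∀ a : α, G'.UniqueAct (some a)

/-- The language `L(G, G')` of the sync-point instrumented program. -/
def instrLang {α : Type} (G' : CFG (Option α)) : Set (List (α × ℕ)) :=
  { τ | ∃ τ' : List (Option α × ℕ), τ = restrictSigma τ' ∧ SyncBullet τ' ∧
      ∀ i : ℕ, projThread i τ' ∈ G'.traces ∨ projThread i τ' = [] }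

/-- `|w|_•` : the number of occurrences of the sync-point symbol in `w`. -/
def bulletCount {α : Type} (w : List (Option α)) : ℕ := (w.filter (fun x => x.isNone)).length

/-- The phase order `⤳`: `a` can occur in a strictly later phase than `b` in
some execution of the instrumented program. -/
def PhaseOrder {α : Type} (G' : CFG (Option α)) (a b : α) : Prop :=
  ∃ τ' : List (Option α × ℕ), SyncBullet τ' ∧ restrictSigma τ' ∈ instrLang G' ∧
    ∃ i j : ℕ, i ≠ j ∧
      ∃ τ₁ σ₁, projThread i τ' = τ₁ ++ some a :: σ₁ ∧
      ∃ τ₂ σ₂, projThread j τ' = τ₂ ++ some b :: σ₂ ∧ bulletCount τ₁ < bulletCount τ₂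

/-! ### General synchronization alphabets -/

/-- A synchronization alphabet: a set `σs` of synchronization actions together
with a predicate `Φ` on indexed words over `Σ ∪ S`, preserved by all
permutations of thread indices. -/
structure SyncAlphabet (α σs : Type) where
  Φ : List ((α ⊕ σs) × ℕ) → Prop
  perm_inv : ∀ (π : Equiv.Perm ℕ) (τ : List ((α ⊕ σs) × ℕ)),
      Φ τ → Φ (τ.map (fun x => (x.1, π x.2)))

/-- Restriction of an indexed word over `Σ ∪ S` to its `Σ`-indexed letters. -/
def restrictActions {α σs : Type} (τ' : List ((α ⊕ σs) × ℕ)) : List (α × ℕ) :=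
  τ'.filterMap (fun x => (x.1.getLeft?).map (fun a => (a, x.2)))

/-- The language of the parameterized program `P = ((S, Φ), G)`. -/
def syncLang {α σs : Type} (SA : SyncAlphabet α σs) (G : CFG (α ⊕ σs)) :
    Set (List (α × ℕ)) :=
  { τ | ∃ τ', τ = restrictActions τ' ∧ SA.Φ τ' ∧
      ∀ i : ℕ, projThread i τ' ∈ G.traces ∨ projThread i τ' = [] }

/-- The configuration `C` is coverable in `P = ((S, Φ), G)`. -/
def Coverable {α σs : Type} (SA : SyncAlphabet α σs) (G : CFG (α ⊕ σs))
    {r : ℕ} (C : Fin r → G.Loc) : Prop :=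
  ∃ (τ' : List ((α ⊕ σs) × ℕ)) (t : Fin r → ℕ), SA.Φ τ' ∧ Function.Injective t ∧
    ∀ k, PathRel G.Edge G.init (projThread (t k) τ') (C k)

/-- Well-formedness of a CFG over `Σ ∪ S` (only actions of `Σ` are required to
label at most one edge). -/
def CFG.WFsum {α σs : Type} (G : CFG (α ⊕ σs)) : Prop :=
  G.EdgeFinite ∧ G.Reachable ∧ ∀ a : α, G.UniqueAct (Sum.inl a)

/-! ### Locks -/

/-- The valid projections of a lock-respecting execution to a single lock `m`:
a sequence of blocks `⟨acq(m) rel(m) : i⟩`, optionally followed by a single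
`⟨acq(m) : i⟩`.  `true` stands for `acq(m)`, `false` for `rel(m)`. -/
inductive LockSeq : List (Bool × ℕ) → Prop
  | nil : LockSeq []
  | final (i : ℕ) : LockSeq [(true, i)]
  | block (i : ℕ) {w : List (Bool × ℕ)} : LockSeq w → LockSeq ((true, i) :: (false, i) :: w)

/-- Projection of an indexed word over `Σ ∪ S_lk` to the indexed occurrences of
`acq(m)`/`rel(m)` for the lock `m`. -/
def lockProj {α M : Type} [DecidableEq M] (m : M) (τ' : List ((α ⊕ (M × Bool)) × ℕ)) :
    List (Bool × ℕ) :=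
  τ'.filterMap (fun x => match x.1 with
    | Sum.inl _ => none
    | Sum.inr p => if p.1 = m then some (p.2, x.2) else none)

/-- The lock synchronization predicate `sync_lk`. -/
def SyncLk {α M : Type} [DecidableEq M] (τ' : List ((α ⊕ (M × Bool)) × ℕ)) : Prop :=
  ∀ m : M, LockSeq (lockProj m τ')

/-- The language of a program `P = ((S_lk, sync_lk), G)` with locks. -/
def lockLang {α M : Type} [DecidableEq M] (G : CFG (α ⊕ (M × Bool))) :
    Set (List (α × ℕ)) :=
  { τ | ∃ τ', τ = restrictActions τ' ∧ SyncLk τ' ∧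
      ∀ i : ℕ, projThread i τ' ∈ G.traces ∨ projThread i τ' = [] }

/-- Coverability of a configuration in a program with locks. -/
def CoverableLk {α M : Type} [DecidableEq M] (G : CFG (α ⊕ (M × Bool)))
    {r : ℕ} (C : Fin r → G.Loc) : Prop :=
  ∃ (τ' : List ((α ⊕ (M × Bool)) × ℕ)) (t : Fin r → ℕ), SyncLk τ' ∧ Function.Injective t ∧
    ∀ k, PathRel G.Edge G.init (projThread (t k) τ') (C k)

/-! ### Locks and sync-points combined -/

/-- Restriction of an indexed word over `Σ ∪ S_lk ∪ {•}` to `(Σ ∪ S_lk)`-indexed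
letters. -/
def restrictSyncWord {α M : Type} (τ' : List (Option (α ⊕ (M × Bool)) × ℕ)) :
    List ((α ⊕ (M × Bool)) × ℕ) :=
  τ'.filterMap (fun x => x.1.map (fun e => (e, x.2)))

/-- Restriction of an indexed word over `Σ ∪ S_lk ∪ {•}` to `(Σ ∪ {•})`-indexed
letters. -/
def restrictBulletWord {α M : Type} (τ' : List (Option (α ⊕ (M × Bool)) × ℕ)) :
    List (Option α × ℕ) :=
  τ'.filterMap (fun x => match x.1 with
    | none => some ((none : Option α), x.2)
    | some (Sum.inl a) => some (some a, x.2)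
    | some (Sum.inr _) => none)

/-- Restriction of an indexed word over `Σ ∪ S_lk ∪ {•}` to `Σ`-indexed letters. -/
def restrictActionsO {α M : Type} (τ' : List (Option (α ⊕ (M × Bool)) × ℕ)) :
    List (α × ℕ) :=
  τ'.filterMap (fun x => match x.1 with
    | some (Sum.inl a) => some (a, x.2)
    | _ => none)

/-- The language `L(P̂, G')` of a lock program instrumented with sync-points. -/
def instrLockLang {α M : Type} [DecidableEq M] (G' : CFG (Option (α ⊕ (M × Bool)))) :
    Set (List (α × ℕ)) :=
  { τ | ∃ τ', τ = restrictActionsO τ' ∧ SyncLk (restrictSyncWord τ') ∧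
      SyncBullet (restrictBulletWord τ') ∧
      ∀ i : ℕ, projThread i τ' ∈ G'.traces ∨ projThread i τ' = [] }

/-- The thread template `G` with locations `p = 0`, `s = 1`, `q = 2` (initial `p`,
exit `q`) and edges `(p,a,q)`, `(p,b₁,s)`, `(s,b₂,q)`, `(p,c,q)`. -/
def exG {α : Type} (a b₁ b₂ c : α) : CFG α where
  Loc := Fin 3
  loc_finite := inferInstance
  Edge := fun ℓ x ℓ' =>
    (ℓ = 0 ∧ x = a ∧ ℓ' = 2) ∨ (ℓ = 0 ∧ x = b₁ ∧ ℓ' = 1) ∨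
    (ℓ = 1 ∧ x = b₂ ∧ ℓ' = 2) ∨ (ℓ = 0 ∧ x = c ∧ ℓ' = 2)
  init := 0
  exit := 2
  init_ne_exit := by decide

/-- The fused thread template `G'` with locations `p = 0`, `q = 1` (initial `p`, exit `q`)
and edges `(p,a,q)`, `(p,β,q)`, `(p,c,q)`. -/
def exG' {α : Type} (a c β : α) : CFG α where
  Loc := Fin 2
  loc_finite := inferInstance
  Edge := fun ℓ x ℓ' =>
    (ℓ = 0 ∧ x = a ∧ ℓ' = 1) ∨ (ℓ = 0 ∧ x = β ∧ ℓ' = 1) ∨ (ℓ = 0 ∧ x = c ∧ ℓ' = 1)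
  init := 0
  exit := 1
  init_ne_exit := by decide

/-- The atomic block body `G_β` with locations `u = 0`, `s = 1`, `v = 2` (initial `u`,
exit `v`) and edges `(u,b₁,s)`, `(s,b₂,v)`. -/
def exGβ {α : Type} (b₁ b₂ : α) : CFG α where
  Loc := Fin 3
  loc_finite := inferInstance
  Edge := fun ℓ x ℓ' => (ℓ = 0 ∧ x = b₁ ∧ ℓ' = 1) ∨ (ℓ = 1 ∧ x = b₂ ∧ ℓ' = 2)
  init := 0
  exit := 2
  init_ne_exit := by decide

/-- The fusion morphism `μ_F` of the atomic fusion `F = (G', (β, G_β))`: it maps `β` to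
`traces(G_β)` and every other action `x` to `{[x]}`. -/
def exMorph {α : Type} (β b₁ b₂ : α) (x : α) : Set (List α) :=
  { w | (x = β ∧ w ∈ (exGβ b₁ b₂).traces) ∨ (x ≠ β ∧ w = [x]) }

/-- The lift `μ̂_F` of the fusion morphism to indexed actions. -/
def exMorphIdx {α : Type} (β b₁ b₂ : α) (x : α × ℕ) : Set (List (α × ℕ)) :=
  { w | ∃ u ∈ exMorph β b₁ b₂ x.1, w = u.map (fun y => (y, x.2)) }

lemma aux_tracesGβ {α : Type} (b₁ b₂ : α) : (exGβ b₁ b₂).traces = {[b₁, b₂]} := by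
  have key : ∀ (ℓ : Fin 3) (w : List α) (ℓe : Fin 3),
      PathRel (exGβ b₁ b₂).Edge ℓ w ℓe → ℓe = 2 →
      (ℓ = 0 → w = [b₁, b₂]) ∧ (ℓ = 1 → w = [b₂]) ∧ (ℓ = 2 → w = []) := by
    intro ℓ w ℓe h
    induction h with
    | nil ℓ =>
      rintro rfl
      exact ⟨fun h => absurd h (by decide), fun h => absurd h (by decide), fun _ => rfl⟩
    | cons e _ ih =>
      rintro rfl
      rcases e with ⟨rfl, rfl, rfl⟩ | ⟨rfl, rfl, rfl⟩
      · refine ⟨fun _ => ?_, fun h => absurd h (by decide), fun h => absurd h (by decide)⟩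
        rw [(ih rfl).2.1 rfl]
      · refine ⟨fun h => absurd h (by decide), fun _ => ?_, fun h => absurd h (by decide)⟩
        rw [(ih rfl).2.2 rfl]
  ext w
  constructor
  · intro h
    exact (key _ _ _ h rfl).1 rfl
  · rintro rfl
    exact PathRel.cons (Or.inl ⟨rfl, rfl, rfl⟩)
      (PathRel.cons (Or.inr ⟨rfl, rfl, rfl⟩) (PathRel.nil _))

lemma aux_tracesG' {α : Type} (a c β : α) :
    (exG' a c β).traces = {[a], [β], [c]} := by
  have key : ∀ (ℓ : Fin 2) (w : List α) (ℓe : Fin 2),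
      PathRel (exG' a c β).Edge ℓ w ℓe → ℓe = 1 →
      (ℓ = 0 → w = [a] ∨ w = [β] ∨ w = [c]) ∧ (ℓ = 1 → w = []) := by
    intro ℓ w ℓe h
    induction h with
    | nil ℓ =>
      rintro rfl
      exact ⟨fun h => absurd h (by decide), fun _ => rfl⟩
    | cons e _ ih =>
      rintro rfl
      rcases e with ⟨rfl, rfl, rfl⟩ | ⟨rfl, rfl, rfl⟩ | ⟨rfl, rfl, rfl⟩
      · exact ⟨fun _ => Or.inl (by rw [(ih rfl).2 rfl]),
          fun h => absurd h (by decide)⟩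
      · exact ⟨fun _ => Or.inr (Or.inl (by rw [(ih rfl).2 rfl])),
          fun h => absurd h (by decide)⟩
      · exact ⟨fun _ => Or.inr (Or.inr (by rw [(ih rfl).2 rfl])),
          fun h => absurd h (by decide)⟩
  ext w
  constructor
  · intro h
    rcases (key _ _ _ h rfl).1 rfl with h | h | h <;> simp [h]
  · rintro (rfl | rfl | rfl)
    · exact PathRel.cons (Or.inl ⟨rfl, rfl, rfl⟩) (PathRel.nil _)
    · exact PathRel.cons (Or.inr (Or.inl ⟨rfl, rfl, rfl⟩)) (PathRel.nil _)
    · exact PathRel.cons (Or.inr (Or.inr ⟨rfl, rfl, rfl⟩)) (PathRel.nil _)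

lemma aux_letters {α : Type} (a c β : α) {w : List (α × ℕ)}
    (hw : w ∈ progLang (exG' a c β)) :
    ∀ x ∈ w, x.1 = a ∨ x.1 = β ∨ x.1 = c := by
  rintro ⟨x, k⟩ hx
  have hmem : x ∈ projThread k w :=
    List.mem_map.mpr ⟨(x, k), List.mem_filter.mpr ⟨hx, by simp⟩, rfl⟩
  rcases hw k with h | h
  · rw [aux_tracesG'] at h
    rcases h with h | h | h <;> rw [h] at hmem <;> simp at hmem <;> simp [hmem]
  · rw [h] at hmem; simp at hmem

lemma aux_noB1B1 {α : Type} (a b₁ b₂ c β : α)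
    (h1 : a ≠ b₁) (h5 : b₁ ≠ b₂) (h6 : b₁ ≠ c)
    {w : List (α × ℕ)} (hw : ∀ x ∈ w, x.1 = a ∨ x.1 = β ∨ x.1 = c)
    {τ : List (α × ℕ)} (hτ : τ ∈ morphWord (exMorphIdx β b₁ b₂) w)
    (i j : ℕ) (rest : List (α × ℕ)) : τ ≠ (b₁, i) :: (b₁, j) :: rest := by
  intro heq
  cases w with
  | nil =>
    rw [show τ = [] from hτ] at heq
    exact List.cons_ne_nil _ _ heq.symm
  | cons x w' =>
    obtain ⟨u, hu, v, _, rfl⟩ := hτ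
    obtain ⟨u₀, hu₀, rfl⟩ := hu
    rcases hu₀ with ⟨hxβ, htr⟩ | ⟨hxβ, rfl⟩
    · rw [aux_tracesGβ] at htr
      rw [show u₀ = [b₁, b₂] from htr] at heq
      simp only [List.map_cons, List.map_nil, List.cons_append, List.nil_append] at heq
      have h2 : ((b₂, x.2) : α × ℕ) = (b₁, j) :=
        List.head_eq_of_cons_eq (List.tail_eq_of_cons_eq heq)
      exact h5 (congrArg Prod.fst h2).symm
    · simp only [List.map_cons, List.map_nil, List.cons_append, List.nil_append] at heq
      have hx1 : x.1 = b₁ := congrArg Prod.fst (List.head_eq_of_cons_eq heq)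
      rcases hw x List.mem_cons_self with h | h | h
      · exact h1 (h.symm.trans hx1)
      · exact hxβ h
      · exact h6 (hx1.symm.trans h)

lemma aux_inv {α : Type} (b₁ b₂ : α) (I' : Set (α × α)) (hnb : (b₁, b₂) ∉ I')
    {σ σ' : List (α × ℕ)}
    (hσ : ∃ i j k l : ℕ, i ≠ j ∧ σ = [(b₁, i), (b₁, j), (b₂, k), (b₂, l)])
    (hs : SwapStep I' σ σ') :
    ∃ i j k l : ℕ, i ≠ j ∧ σ' = [(b₁, i), (b₁, j), (b₂, k), (b₂, l)] := by
  obtain ⟨i, j, k, l, hij, rfl⟩ := hσ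
  obtain ⟨ρ, s, x, y, p, q, hxy, hpq, heq, rfl⟩ := hs
  rcases ρ with _ | ⟨r1, _ | ⟨r2, _ | ⟨r3, ρ⟩⟩⟩
  · simp only [List.nil_append, List.cons.injEq, Prod.mk.injEq] at heq
    obtain ⟨⟨rfl, rfl⟩, ⟨rfl, rfl⟩, rfl⟩ := heq
    exact ⟨j, i, k, l, hij.symm, by simp⟩
  · simp only [List.cons_append, List.nil_append, List.cons.injEq, Prod.mk.injEq] at heq
    obtain ⟨rfl, ⟨rfl, rfl⟩, ⟨rfl, rfl⟩, rfl⟩ := heq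
    exact absurd hxy hnb
  · simp only [List.cons_append, List.nil_append, List.cons.injEq, Prod.mk.injEq] at heq
    obtain ⟨rfl, rfl, ⟨rfl, rfl⟩, ⟨rfl, rfl⟩, rfl⟩ := heq
    exact ⟨i, j, l, k, hij, by simp⟩
  · exfalso
    have hl := congrArg List.length heq
    simp [List.length_append] at hl
    omega

lemma aux_cov {α : Type} (b₁ b₂ : α) (I' : Set (α × α)) (hnb : (b₁, b₂) ∉ I')
    {σ' : List (α × ℕ)}
    (h : CoveredBy I' ([(b₁, 1), (b₁, 2), (b₂, 1), (b₂, 2)] : List (α × ℕ)) σ') :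
    ∃ i j k l : ℕ, i ≠ j ∧ σ' = [(b₁, i), (b₁, j), (b₂, k), (b₂, l)] := by
  induction h with
  | refl => exact ⟨1, 2, 1, 2, by decide, rfl⟩
  | tail _ hs ih => exact aux_inv b₁ b₂ I' hnb ih hs

/-- Mover properties do not characterize sound atomic fusions.
With `I = {a,b₁,b₂,c}² ∖ {(a,b₂),(b₁,c)}` and `I' = I ∖ {(b₁,b₂)}`:
(i) every action in `{a,b₁,b₂,c}` has the same left/right mover status wrt. `I` and `I'`;
(ii) `F = (G', (β, G_β))` is unsound wrt. `I'` — in particular the interleaving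
`⟨b₁:1⟩⟨b₁:2⟩⟨b₂:1⟩⟨b₂:2⟩ ∈ L(G)` is covered (up to `I'`) by no `τ' ∈ μ̂_F(L(G'))`. -/
theorem stmt_13 {α : Type} (a b₁ b₂ c β : α)
    (h1 : a ≠ b₁) (h2 : a ≠ b₂) (h3 : a ≠ c) (h4 : a ≠ β) (h5 : b₁ ≠ b₂)
    (h6 : b₁ ≠ c) (h7 : b₁ ≠ β) (h8 : b₂ ≠ c) (h9 : b₂ ≠ β) (h10 : c ≠ β)
    (I I' : Set (α × α))
    (hI : I = (({a, b₁, b₂, c} : Set α) ×ˢ ({a, b₁, b₂, c} : Set α)) \ {(a, b₂), (b₁, c)})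
    (hI' : I' = I \ {(b₁, b₂)}) :
    (∀ x ∈ ({a, b₁, b₂, c} : Set α),
        (LeftMover (exG a b₁ b₂ c) I x ↔ LeftMover (exG a b₁ b₂ c) I' x) ∧
        (RightMover (exG a b₁ b₂ c) I x ↔ RightMover (exG a b₁ b₂ c) I' x)) ∧
      ([(b₁, 1), (b₁, 2), (b₂, 1), (b₂, 2)] : List (α × ℕ)) ∈ progLang (exG a b₁ b₂ c) ∧
      (∀ τ' ∈ morphLang (exMorphIdx β b₁ b₂) (progLang (exG' a c β)),
        ¬ CoveredBy I' ([(b₁, 1), (b₁, 2), (b₂, 1), (b₂, 2)] : List (α × ℕ)) τ') ∧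
      ¬ MazReduction I' (morphLang (exMorphIdx β b₁ b₂) (progLang (exG' a c β)))
          (progLang (exG a b₁ b₂ c)) := by
  have hI'sub : I' ⊆ I := by rw [hI']; exact Set.diff_subset
  have ha_alph : a ∈ (exG a b₁ b₂ c).alphabet := ⟨(0 : Fin 3), (2 : Fin 3), Or.inl ⟨rfl, rfl, rfl⟩⟩
  have hc_alph : c ∈ (exG a b₁ b₂ c).alphabet :=
    ⟨(0 : Fin 3), (2 : Fin 3), Or.inr (Or.inr (Or.inr ⟨rfl, rfl, rfl⟩))⟩
  have hab2 : (a, b₂) ∉ I := by rw [hI]; simp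
  have hb1c : (b₁, c) ∉ I := by rw [hI]; simp
  have hnb : (b₁, b₂) ∉ I' := by rw [hI']; simp
  have hmemτ : ([(b₁, 1), (b₁, 2), (b₂, 1), (b₂, 2)] : List (α × ℕ)) ∈
      progLang (exG a b₁ b₂ c) := by
    intro i
    have htr : [b₁, b₂] ∈ (exG a b₁ b₂ c).traces :=
      PathRel.cons (Or.inr (Or.inl ⟨rfl, rfl, rfl⟩))
        (PathRel.cons (Or.inr (Or.inr (Or.inl ⟨rfl, rfl, rfl⟩))) (PathRel.nil _))
    rcases eq_or_ne i 1 with rfl | hi1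
    · left; simpa [projThread] using htr
    rcases eq_or_ne i 2 with rfl | hi2
    · left; simpa [projThread] using htr
    · right
      simp [projThread, List.filter_eq_nil_iff]
      omega
  have hpart3 : ∀ τ' ∈ morphLang (exMorphIdx β b₁ b₂) (progLang (exG' a c β)),
      ¬ CoveredBy I' ([(b₁, 1), (b₁, 2), (b₂, 1), (b₂, 2)] : List (α × ℕ)) τ' := by
    intro τ' hτ' hcov
    obtain ⟨i, j, k, l, hij, rfl⟩ := aux_cov b₁ b₂ I' hnb hcov
    simp only [morphLang, Set.mem_iUnion] at hτ'
    obtain ⟨w, hw, hm⟩ := hτ'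
    exact aux_noB1B1 a b₁ b₂ c β h1 h5 h6 (aux_letters a c β hw) hm i j _ rfl
  refine ⟨?_, hmemτ, hpart3, ?_⟩
  · rintro x hx
    constructor
    · constructor
      · intro h b hb
        rw [hI']
        refine ⟨h b hb, ?_⟩
        simp only [Set.mem_singleton_iff, Prod.mk.injEq, not_and]
        intro _ h'
        rcases hx with hxa | hxb1 | hxb2 | hxc
        · exact h2 (hxa.symm.trans h')
        · exact h5 (hxb1.symm.trans h')
        · exact hab2 (hxb2 ▸ h a ha_alph)
        · exact h8 (hxc.symm.trans h').symm
      · intro h b hb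
        exact hI'sub (h b hb)
    · constructor
      · intro h b hb
        rw [hI']
        refine ⟨h b hb, ?_⟩
        simp only [Set.mem_singleton_iff, Prod.mk.injEq, not_and]
        intro h' _
        rcases hx with hxa | hxb1 | hxb2 | hxc
        · exact h1 (hxa.symm.trans h')
        · exact hb1c (hxb1 ▸ h c hc_alph)
        · exact h5 (hxb2.symm.trans h').symm
        · exact h6 (hxc.symm.trans h').symm
      · intro h b hb
        exact hI'sub (h b hb)
  · rintro ⟨_, hred⟩
    obtain ⟨τ', hτ', hcov⟩ := hred _ hmemτ
    exact hpart3 τ' hτ' hcov
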